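/- arXiv:1212.1435 — 5 statements merged into one kernel-verified Lean document; each statement's English description precedes it below -/
import Mathlib

section
/- Let C be a spherical fusion category over ℂ with FSexp(C)=N, let F: Z(C) → C be the forgetful functor from the Drinfeld center, and let θ be the twist of the modular tensor category Z(C). Then for every V ∈ C, ν̄(V) = (N/dim C) · Σ_X [F(X):V]_C · d(X), where the sum runs over those isomorphism classes of simple objects X of Z(C) with θ_X = id_X, [F(X):V]_C = dim Hom_C(F(X), V), and d(X) is the pivotal dimension of X. -/
open scoped Classical

/-- Abstract Frobenius–Schur indicator data of a spherical fusion category `C` over `ℂ`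
together with the structure of its Drinfeld center `Z(C)` needed for the indicator formula of
Ng–Schauenburg: `ZSimple` indexes the isomorphism classes of simple objects `X` of `Z(C)`,
`ωZ X` is the scalar by which the twist `θ` acts on `X` (so `θ_X = ω_X · id_X`, a root of
unity whose order divides `FSexp(C) = ord(θ)`), `dZ X` is the pivotal dimension of `X`,
`mult X V = [F(X) : V]_C = dim Hom_C(F(X), V)` for the forgetful functor `F : Z(C) → C`,
`dimC` is the global dimension `dim C`, and `ν V n = (1 / dim C) · ptr(θ_{K(V)}^n)
= (1 / dim C) Σ_X [F(X):V] ω_X^n d(X)` is the `n`-th Frobenius–Schur indicator. -/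
structure SphericalFusionCenterData where
  /-- the objects of the spherical fusion category `C` -/
  Obj : Type
  /-- the pivotal dimension in `C` -/
  d : Obj → ℂ
  /-- `ν V n` is the `n`-th Frobenius–Schur indicator `ν_n(V)` -/
  ν : Obj → ℕ → ℂ
  /-- the Frobenius–Schur exponent `N = FSexp(C)` -/
  FSexp : ℕ
  FSexp_pos : 0 < FSexp
  FSexp_spec : ∀ V, ν V FSexp = d V
  FSexp_min : ∀ n, 0 < n → (∀ V, ν V n = d V) → FSexp ≤ n
  /-- the global dimension `dim C` -/
  dimC : ℂ
  dimC_ne_zero : dimC ≠ 0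
  /-- the isomorphism classes of simple objects of the Drinfeld center `Z(C)` -/
  ZSimple : Type
  [instFintypeZ : Fintype ZSimple]
  /-- the twist scalars: `θ_X = ωZ X · id_X` on a simple `X ∈ Z(C)` -/
  ωZ : ZSimple → ℂ
  /-- the pivotal dimension of a simple object of `Z(C)` -/
  dZ : ZSimple → ℂ
  /-- `mult X V = [F(X) : V]_C = dim Hom_C(F(X), V)` -/
  mult : ZSimple → Obj → ℕ
  /-- the twist has order dividing `FSexp(C)` (Ng–Schauenburg: `FSexp(C) = ord θ`) -/
  ωZ_pow_FSexp : ∀ X, ωZ X ^ FSexp = 1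
  /-- the Ng–Schauenburg indicator formula
  `ν_n(V) = (1 / dim C) Σ_X [F(X):V]_C ω_X^n d(X)` -/
  ν_formula : ∀ V n, ν V n = dimC⁻¹ * ∑ X : ZSimple, (mult X V : ℂ) * ωZ X ^ n * dZ X

attribute [instance] SphericalFusionCenterData.instFintypeZ

/-- The total Frobenius–Schur indicator `ν̄(V) = Σ_{i=1}^{N} ν_i(V)`, `N = FSexp(C)`. -/
noncomputable def SphericalFusionCenterData.totalInd (C : SphericalFusionCenterData)
    (V : C.Obj) : ℂ :=
  ∑ i ∈ Finset.Icc 1 C.FSexp, C.ν V i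

/-- **Proposition 2.3(ii).** Let `C` be a spherical fusion category over `ℂ`
with `FSexp(C) = N`, `F : Z(C) → C` the forgetful functor and `θ` the twist of `Z(C)`.  Then
for every `V ∈ C`,
`ν̄(V) = (N / dim C) · Σ_{X ∈ Irr(Z(C)), θ_X = id_X} [F(X) : V]_C · d(X)`. -/
theorem totalInd_formula (C : SphericalFusionCenterData) (V : C.Obj) :
    C.totalInd V =
      (C.FSexp : ℂ) / C.dimC *
        ∑ X : C.ZSimple, (if C.ωZ X = 1 then (C.mult X V : ℂ) * C.dZ X else 0) := by
  have key : ∀ ω : ℂ, ω ^ C.FSexp = 1 →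
      ∑ i ∈ Finset.Icc 1 C.FSexp, ω ^ i = if ω = 1 then (C.FSexp : ℂ) else 0 := by
    intro ω hω
    by_cases h1 : ω = 1
    · simp [h1, Nat.card_Icc]
    · rw [if_neg h1]
      have : ∑ i ∈ Finset.Icc 1 C.FSexp, ω ^ i
          = ω * ∑ i ∈ Finset.range C.FSexp, ω ^ i := by
        rw [Finset.mul_sum]
        rw [show Finset.Icc 1 C.FSexp = Finset.map ⟨Nat.succ, Nat.succ_injective⟩
            (Finset.range C.FSexp) by
          ext x
          simp only [Finset.mem_Icc, Finset.mem_map, Finset.mem_range,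
            Function.Embedding.coeFn_mk, Nat.succ_eq_add_one]
          constructor
          · rintro ⟨h1, h2⟩; exact ⟨x - 1, by omega, by omega⟩
          · rintro ⟨a, ha, h⟩; omega]
        rw [Finset.sum_map]
        simp [pow_succ, mul_comm]
      rw [this, geom_sum_eq h1, hω]
      simp
  unfold SphericalFusionCenterData.totalInd
  simp only [C.ν_formula]
  rw [← Finset.mul_sum, Finset.sum_comm]
  rw [div_eq_mul_inv, mul_comm ((C.FSexp : ℂ)) _, mul_assoc]
  congr 1
  rw [Finset.mul_sum]
  apply Finset.sum_congr rfl
  intro X _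
  have : ∑ i ∈ Finset.Icc 1 C.FSexp, (C.mult X V : ℂ) * C.ωZ X ^ i * C.dZ X
      = (C.mult X V : ℂ) * (∑ i ∈ Finset.Icc 1 C.FSexp, C.ωZ X ^ i) * C.dZ X := by
    rw [Finset.mul_sum, Finset.sum_mul]
  rw [this, key _ (C.ωZ_pow_FSexp X)]
  by_cases h : C.ωZ X = 1 <;> simp [h] 
  · ring
end

section
/- Let G be an abelian group and (ω,c) an Eilenberg–MacLane 3-cocycle of G with values in ℂ^×. Then the map b: G×G → ℂ^× defined by b(x,y) = c(x,y)·c(y,x) is a bicharacter of G, i.e. b(xy,z) = b(x,z)b(y,z) and b(x,yz) = b(x,y)b(x,z) for all x,y,z ∈ G. -/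
/-- `ω` is a normalized 3-cocycle on `G` with values in `ℂˣ`. -/
def IsNormalized3Cocycle {G : Type*} [CommGroup G] (ω : G → G → G → ℂˣ) : Prop :=
  (∀ x y z w, ω y z w * ω x (y * z) w * ω x y z = ω (x * y) z w * ω x y (z * w)) ∧
  (∀ x y, ω x 1 y = 1)

/-- `(ω, c)` is an Eilenberg–MacLane 3-cocycle of the abelian group `G`. -/
def IsEM3Cocycle {G : Type*} [CommGroup G] (ω : G → G → G → ℂˣ) (c : G → G → ℂˣ) : Prop :=
  IsNormalized3Cocycle ω ∧
  (∀ x y z, c (x * y) z * ω x z y = c x z * c y z * ω x y z * ω z x y) ∧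
  (∀ x y z, c x (y * z) * ω x y z * ω y z x = c x y * c x z * ω y x z)

/-- `b` is a bicharacter of `G`, i.e. multiplicative in each variable. -/
def IsBicharacter {G : Type*} [CommGroup G] (b : G → G → ℂˣ) : Prop :=
  ∀ x y z, b (x * y) z = b x z * b y z ∧ b x (y * z) = b x y * b x z

/-- If `(ω, c)` is an Eilenberg–MacLane 3-cocycle of an abelian group `G`
with values in `ℂˣ`, then `b (x, y) = c (x, y) · c (y, x)` is a bicharacter of `G`. -/
theorem bicharacter_of_EM3Cocycle
    {G : Type*} [CommGroup G]
    (ω : G → G → G → ℂˣ) (c : G → G → ℂˣ) (hEM : IsEM3Cocycle ω c) :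
    IsBicharacter (fun x y => c x y * c y x) := by
  obtain ⟨-, h2, h3⟩ := hEM
  intro x y z
  constructor
  · have A := congrArg Units.val (h2 x y z)
    have B := congrArg Units.val (h3 z x y)
    rw [Units.ext_iff]
    push_cast at A B ⊢
    have hW : ((ω x z y : ℂ) * ω z x y * ω x y z) ≠ 0 :=
      mul_ne_zero (mul_ne_zero (Units.ne_zero _) (Units.ne_zero _)) (Units.ne_zero _)
    apply mul_left_cancel₀ hW
    linear_combination ((c z (x*y) : ℂ) * ω z x y * ω x y z) * A +
      ((c x z : ℂ) * c y z * ω x y z * ω z x y) * B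
  · have A := congrArg Units.val (h3 x y z)
    have B := congrArg Units.val (h2 y z x)
    rw [Units.ext_iff]
    push_cast at A B ⊢
    have hW : ((ω x y z : ℂ) * ω y z x * ω y x z) ≠ 0 :=
      mul_ne_zero (mul_ne_zero (Units.ne_zero _) (Units.ne_zero _)) (Units.ne_zero _)
    apply mul_left_cancel₀ hW
    linear_combination ((c (y*z) x : ℂ) * ω y x z) * A +
      ((c x y : ℂ) * c x z * ω y x z) * B
end

section
/- Let G be an abelian group and (ω,c) an Eilenberg–MacLane 3-cocycle of G with values in ℂ^×. Then the trace t(x) = c(x,x) is a quadratic function on G: t(x^a) = t(x)^{a²} for all x ∈ G and a ∈ ℤ, and the map b_t(x,y) = t(xy)/(t(x)t(y)) is a bicharacter of G. -/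
/-- If `(ω, c)` is an Eilenberg–MacLane 3-cocycle of an abelian group `G`,
then the trace `t x = c x x` is a quadratic function on `G`: `t (x ^ a) = t (x) ^ (a²)`
for every integer `a`, and `b_t (x, y) = t (x y) / (t x · t y)` is a bicharacter of `G`. -/
theorem trace_of_EM3Cocycle_is_quadratic
    {G : Type*} [CommGroup G]
    (ω : G → G → G → ℂˣ) (c : G → G → ℂˣ) (hEM : IsEM3Cocycle ω c) :
    (∀ (x : G) (a : ℤ), c (x ^ a) (x ^ a) = (c x x) ^ (a ^ 2)) ∧
    IsBicharacter (fun x y => c (x * y) (x * y) * (c x x)⁻¹ * (c y y)⁻¹) := by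
  obtain ⟨⟨hco, hn⟩, h1, h2⟩ := hEM
  have hω1 : ∀ y z, ω 1 y z = 1 := by
    intro y z
    have h := hco 1 1 y z
    simp only [hn, one_mul, mul_one] at h
    exact mul_eq_left.mp h
  have hω3 : ∀ x y, ω x y 1 = 1 := by
    intro x y
    have h := hco x y 1 1
    simp only [hn, one_mul, mul_one] at h
    exact mul_eq_left.mp (by rw [mul_comm] at h; exact h)
  have hc1 : ∀ z, c 1 z = 1 := by
    intro z
    have h := h1 1 1 z
    simp only [hn, hω1, hω3, one_mul, mul_one] at h
    exact (mul_eq_left.mp h.symm)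
  have hc2 : ∀ z, c z 1 = 1 := by
    intro z
    have h := h2 z 1 1
    simp only [hn, hω1, hω3, one_mul, mul_one] at h
    exact (mul_eq_left.mp h.symm)
  have e1 : ∀ x y, c (x * y) x = c x x * c y x * ω x y x := by
    intro x y
    have h := h1 x y x
    exact mul_right_cancel h
  have e2 : ∀ x y, c (x * y) y = c x y * c y y * ω y x y := by
    intro x y
    have h := h1 x y y
    rw [mul_right_comm (c x y * c y y) (ω x y y) (ω y x y)] at h
    exact mul_right_cancel h
  have A : ∀ x y, c (x * y) (x * y) = c x x * c y y * (c x y * c y x) := by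
    intro x y
    have e3 := h2 (x * y) x y
    have e4 := hco x y x y
    rw [mul_comm y x] at e4
    have key : c (x * y) (x * y) * (ω (x * y) x y * ω x y (x * y)) =
        (c x x * c y y * (c x y * c y x)) * (ω (x * y) x y * ω x y (x * y)) := by
      rw [← mul_assoc, e3, e1, e2, ← e4]
      simp only [mul_comm, mul_left_comm, mul_assoc]
    exact mul_right_cancel key
  have Smul : ∀ x y z, c (x * y) z * c z (x * y) = (c x z * c z x) * (c y z * c z y) := by
    intro x y z
    have p := h1 x y z
    have q := h2 z x y
    have key : (c (x * y) z * c z (x * y)) * (ω x z y * (ω z x y * ω x y z)) =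
        ((c x z * c z x) * (c y z * c z y)) * (ω x z y * (ω z x y * ω x y z)) := by
      calc (c (x * y) z * c z (x * y)) * (ω x z y * (ω z x y * ω x y z))
          = (c (x * y) z * ω x z y) * (c z (x * y) * ω z x y * ω x y z) := by
            simp only [mul_comm, mul_left_comm, mul_assoc]
        _ = (c x z * c y z * ω x y z * ω z x y) * (c z x * c z y * ω x z y) := by
            rw [p, q]
        _ = ((c x z * c z x) * (c y z * c z y)) * (ω x z y * (ω z x y * ω x y z)) := by
            simp only [mul_comm, mul_left_comm, mul_assoc]
    exact mul_right_cancel key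
  have Spow : ∀ (x z : G) (n : ℕ), c (x ^ n) z * c z (x ^ n) = (c x z * c z x) ^ n := by
    intro x z n
    induction n with
    | zero => simp [hc1, hc2]
    | succ n ih =>
      rw [pow_succ, Smul, ih, pow_succ]
  have Q : ∀ (x : G) (n : ℕ), c (x ^ n) (x ^ n) = (c x x) ^ (n ^ 2) := by
    intro x n
    induction n with
    | zero => simp [hc1]
    | succ n ih =>
      rw [pow_succ, A, ih, Spow]
      rw [show c x x * c x x = (c x x) ^ 2 from (sq (c x x)).symm, ← pow_mul,
        show (n + 1) ^ 2 = n ^ 2 + 2 * n + 1 by ring, pow_add, pow_add, pow_one]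
      simp only [mul_comm, mul_left_comm, mul_assoc]
  have tinv : ∀ x : G, c x⁻¹ x⁻¹ = c x x := by
    intro x
    have h := A x x⁻¹
    rw [mul_inv_cancel] at h
    have hS : c x x⁻¹ * c x⁻¹ x = ((c x x) * (c x x))⁻¹ := by
      have := Smul x x⁻¹ x
      rw [mul_inv_cancel, hc1, hc2, one_mul] at this
      rw [mul_comm (c x x⁻¹) (c x⁻¹ x)]
      exact eq_inv_of_mul_eq_one_right (by rw [← this])
    rw [hc1, hS] at h
    exact mul_left_cancel (mul_inv_eq_one.mp h.symm)
  refine ⟨?_, ?_⟩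
  · intro x a
    rcases a with n | n
    · have hcast : ((n : ℤ)) ^ 2 = ((n ^ 2 : ℕ) : ℤ) := by push_cast; ring
      rw [Int.ofNat_eq_coe, zpow_natCast, Q, hcast, zpow_natCast]
    · have hcast : (Int.negSucc n) ^ 2 = (((n + 1) ^ 2 : ℕ) : ℤ) := by
        rw [Int.negSucc_eq]; push_cast; ring
      rw [zpow_negSucc, tinv, Q, hcast, zpow_natCast]
  · intro x y z
    have hb : ∀ u v : G, c (u * v) (u * v) * (c u u)⁻¹ * (c v v)⁻¹ = c u v * c v u := by
      intro u v
      rw [A, mul_inv_eq_iff_eq_mul, mul_inv_eq_iff_eq_mul]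
      simp only [mul_comm, mul_left_comm, mul_assoc]
    beta_reduce
    constructor
    · show c ((x*y)*z) ((x*y)*z) * (c (x*y) (x*y))⁻¹ * (c z z)⁻¹ =
        (c (x*z) (x*z) * (c x x)⁻¹ * (c z z)⁻¹) * (c (y*z) (y*z) * (c y y)⁻¹ * (c z z)⁻¹)
      rw [hb, hb, hb, Smul]
    · show c (x*(y*z)) (x*(y*z)) * (c x x)⁻¹ * (c (y*z) (y*z))⁻¹ =
        (c (x*y) (x*y) * (c x x)⁻¹ * (c y y)⁻¹) * (c (x*z) (x*z) * (c x x)⁻¹ * (c z z)⁻¹)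
      rw [hb, hb, hb, mul_comm (c x (y * z)), Smul]
      simp only [mul_comm, mul_left_comm, mul_assoc]
end

section
/- Let V = 𝔽₂^{2ℓ}, B a non-degenerate symmetric bilinear form on V, τ a square root of |V|⁻¹ = 2^{-2ℓ}, and C = TY(V, χ_B, τ) the Tambara–Yamagami category with its canonical spherical structure. (i) If B is not alternating, then FSexp(C) = 8 and ν̄(m) = 2·sgn(τ) + 2^ℓ. (ii) If B is alternating, then FSexp(C) = 4 and ν̄(m) = sgn(τ) + 2^ℓ. Consequently, ν̄(m) = 0 if and only if B is not alternating, ℓ = 1, and sgn(τ) = −1. -/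
open scoped Classical

/-- Objects of the Tambara–Yamagami category `TY(V, χ_B, τ)`: the invertible objects
`a ∈ V` together with the non-invertible simple object `m`. -/
abbrev TYObj (V : Type) : Type := V ⊕ Unit

/-- The pivotal dimensions in `TY(V, χ_B, τ)` for `V` of order `2^(2ℓ)`:
`d(a) = 1` for `a ∈ V` and `d(m) = √|V| = 2^ℓ`. -/
noncomputable def dTY2 (ℓ : ℕ) : TYObj (Fin (2 * ℓ) → ZMod 2) → ℂ :=
  Sum.elim (fun _ => (1 : ℂ)) (fun _ => (2 : ℂ) ^ ℓ)

section Aux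

lemma TYaux_Ipow (k : ℕ) : Complex.I ^ (-(k:ℤ)) = (Complex.I ^ k)⁻¹ := by
  rw [zpow_neg, zpow_natCast]

lemma TYaux_c2 : ((Real.sqrt 2 : ℝ) : ℂ) ^ 2 = 2 := by
  rw [← Complex.ofReal_pow, Real.sq_sqrt (by norm_num : (0:ℝ) ≤ 2)]; norm_num

lemma TYaux_w2 : ((1 + Complex.I) / (Real.sqrt 2 : ℂ)) ^ 2 = Complex.I := by
  rw [div_pow, TYaux_c2]
  have : (1 + Complex.I) ^ 2 = 2 * Complex.I := by
    ring_nf; rw [Complex.I_sq]; ring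
  rw [this]; ring

lemma TYaux_key (ℓ : ℕ) (x : ℂ) :
    (x / (Real.sqrt 2 : ℂ)) ^ (2 * ℓ) = (x ^ 2 / 2) ^ ℓ := by
  rw [pow_mul, div_pow, TYaux_c2]

lemma TYaux_I4 : Complex.I ^ 4 = 1 := by norm_num [pow_succ, Complex.I_sq]

lemma TYaux_sum8 (f : ℕ → ℂ) : ∑ i ∈ Finset.Icc 1 8, f i
    = f 1 + f 2 + f 3 + f 4 + f 5 + f 6 + f 7 + f 8 := by
  have : Finset.Icc (1:ℕ) 8 = {1,2,3,4,5,6,7,8} := by decide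
  rw [this]
  norm_num [Finset.sum_insert, Finset.mem_insert]
  ring

lemma TYaux_sum4 (f : ℕ → ℂ) : ∑ i ∈ Finset.Icc 1 4, f i
    = f 1 + f 2 + f 3 + f 4 := by
  have : Finset.Icc (1:ℕ) 4 = {1,2,3,4} := by decide
  rw [this]
  norm_num [Finset.sum_insert, Finset.mem_insert]
  ring

lemma TYaux_pow_ne_one {ℓ : ℕ} (hℓ : 0 < ℓ) : (2:ℂ) ^ ℓ ≠ 1 := by
  intro h
  have h2 : (2:ℕ) ^ ℓ = 1 := by exact_mod_cast h
  have := Nat.one_lt_two_pow_iff.mpr (by omega : ℓ ≠ 0)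
  omega

lemma TYaux_pow_ne_neg_one (ℓ : ℕ) : (2:ℂ) ^ ℓ ≠ -1 := by
  intro h
  have h2 : (2:ℤ) ^ ℓ = -1 := by exact_mod_cast h
  have := pow_pos (by norm_num : (0:ℤ) < 2) ℓ
  omega

lemma TYaux_pow_ne_neg_two (ℓ : ℕ) : (2:ℂ) ^ ℓ ≠ -2 := by
  intro h
  have h2 : (2:ℤ) ^ ℓ = -2 := by exact_mod_cast h
  have := pow_pos (by norm_num : (0:ℤ) < 2) ℓ
  omega

lemma TYaux_pow_eq_two {ℓ : ℕ} (h : (2:ℂ) ^ ℓ = 2) : ℓ = 1 := by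
  have h2 : (2:ℕ) ^ ℓ = 2 ^ 1 := by exact_mod_cast h
  exact Nat.pow_right_injective (le_refl 2) h2

end Aux

/-- **Proposition 5.6.** Let `V = 𝔽₂^(2ℓ)`, `B` a non-degenerate symmetric
bilinear form on `V`, `τ` a square root of `|V|⁻¹ = 2^(-2ℓ)`, and `C = TY(V, χ_B, τ)` the
Tambara–Yamagami category with its canonical spherical structure, whose Frobenius–Schur
indicators are given by `ν_n(a) = δ_{na,0}` for `a ∈ V` and by Shimizu's formulas for `m`
(recorded as hypotheses below, `sgn(τ)` being the sign of `τ`), and let `N = FSexp(C)` be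
the least positive integer with `ν_N(s) = d(s)` for all simple objects `s`.  Then:
(i) if `B` is not alternating, `FSexp(C) = 8` and `ν̄(m) = 2·sgn(τ) + 2^ℓ`;
(ii) if `B` is alternating, `FSexp(C) = 4` and `ν̄(m) = sgn(τ) + 2^ℓ`.
Consequently `ν̄(m) = 0` iff `B` is not alternating, `ℓ = 1` and `sgn(τ) = -1`. -/
theorem TY_char2_FSexp_and_totalInd
    (ℓ : ℕ) (hℓ : 0 < ℓ)
    (B : (Fin (2 * ℓ) → ZMod 2) →ₗ[ZMod 2] (Fin (2 * ℓ) → ZMod 2) →ₗ[ZMod 2] ZMod 2)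
    (hBsymm : ∀ v w, B v w = B w v)
    (hBnondeg : ∀ v, (∀ w, B v w = 0) → v = 0)
    (τ : ℝ) (hτ : τ ^ 2 = ((2 : ℝ) ^ (2 * ℓ))⁻¹)
    (ν : TYObj (Fin (2 * ℓ) → ZMod 2) → ℕ → ℂ)
    -- the indicators of the invertible objects: `ν_n(a) = δ_{na,0}`
    (hνa : ∀ a n, ν (Sum.inl a) n = if n • a = 0 then (1 : ℂ) else 0)
    -- Shimizu's formulas for the indicators of `m`:
    (hνodd : ∀ n, Odd n → ν (Sum.inr ()) n = 0)
    (hν_not_alt : ¬ (∀ v, B v v = 0) → ∀ k, 0 < k →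
      ν (Sum.inr ()) (2 * k) =
        (if 0 < τ then (1 : ℂ) else -1) ^ k *
          ((1 + Complex.I) / (Real.sqrt 2 : ℂ)) ^ (2 * ℓ * k) *
          ((1 + Complex.I ^ (-(k : ℤ))) / (Real.sqrt 2 : ℂ)) ^ (2 * ℓ))
    (hν_alt : (∀ v, B v v = 0) → ∀ k, 0 < k →
      ν (Sum.inr ()) (2 * k) =
        if Odd k then (if 0 < τ then (1 : ℂ) else -1) else (2 : ℂ) ^ ℓ)
    -- `N = FSexp(C)`:
    (N : ℕ) (hN : 0 < N)
    (hNspec : ∀ s, ν s N = dTY2 ℓ s)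
    (hNmin : ∀ n, 0 < n → (∀ s, ν s n = dTY2 ℓ s) → N ≤ n) :
    (¬ (∀ v, B v v = 0) →
        N = 8 ∧ (∑ i ∈ Finset.Icc 1 N, ν (Sum.inr ()) i) =
          2 * (if 0 < τ then (1 : ℂ) else -1) + 2 ^ ℓ) ∧
    ((∀ v, B v v = 0) →
        N = 4 ∧ (∑ i ∈ Finset.Icc 1 N, ν (Sum.inr ()) i) =
          (if 0 < τ then (1 : ℂ) else -1) + 2 ^ ℓ) ∧
    ((∑ i ∈ Finset.Icc 1 N, ν (Sum.inr ()) i) = 0 ↔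
        ¬ (∀ v, B v v = 0) ∧ ℓ = 1 ∧ τ < 0) := by
  set s : ℂ := (if 0 < τ then (1 : ℂ) else -1) with hs
  -- basic facts about s and τ
  have hτ0 : τ ≠ 0 := by
    intro h
    have h0 : (0:ℝ) = ((2:ℝ) ^ (2*ℓ))⁻¹ := by rw [← hτ, h]; ring
    have hp : (0:ℝ) < ((2:ℝ) ^ (2*ℓ))⁻¹ := by positivity
    linarith
  have hτneg : (¬ 0 < τ) ↔ τ < 0 :=
    ⟨fun h => lt_of_le_of_ne (not_lt.mp h) hτ0, fun h => not_lt.mpr h.le⟩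
  have hscases : s = 1 ∨ s = -1 := by
    by_cases h : 0 < τ <;> simp [hs, h]
  have hs2 : s ^ 2 = 1 := by rcases hscases with h | h <;> rw [h] <;> ring
  have hpne : (2:ℂ) ^ ℓ ≠ 0 := pow_ne_zero _ two_ne_zero
  have hp1 := TYaux_pow_ne_one hℓ
  have hpm1 := TYaux_pow_ne_neg_one ℓ
  -- smul facts for invertible objects
  have haeven : ∀ (k : ℕ) (a : Fin (2*ℓ) → ZMod 2), (2*k) • a = 0 := by
    intro k a
    rw [mul_smul]
    ext i
    simp [Pi.smul_apply, two_smul, CharTwo.add_self_eq_zero]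
  have hI4 := TYaux_I4
  have hImulnegI : Complex.I * -Complex.I = 1 := by
    rw [mul_neg, Complex.I_mul_I, neg_neg]
  have hw : ∀ k, ((1 + Complex.I) / (Real.sqrt 2 : ℂ)) ^ (2 * ℓ * k)
      = Complex.I ^ (ℓ * k) := by
    intro k
    rw [mul_assoc, pow_mul, TYaux_w2]
  -- the four inverse powers of I
  have hi1 : (1 + Complex.I ^ (-((1:ℕ):ℤ))) = 1 - Complex.I := by
    rw [TYaux_Ipow, pow_one, Complex.inv_I]; ring
  have hi2 : (1 + Complex.I ^ (-((2:ℕ):ℤ))) = 0 := by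
    rw [TYaux_Ipow, Complex.I_sq]; norm_num
  have hi3 : (1 + Complex.I ^ (-((3:ℕ):ℤ))) = 1 + Complex.I := by
    rw [TYaux_Ipow, pow_succ, Complex.I_sq,
      show (-1 : ℂ) * Complex.I = -Complex.I by ring, inv_neg, Complex.inv_I, neg_neg]
  have hi4 : (1 + Complex.I ^ (-((4:ℕ):ℤ))) = 2 := by
    rw [TYaux_Ipow, TYaux_I4]; norm_num
  -- the second factors
  have hF1 : ((1 + Complex.I ^ (-((1:ℕ):ℤ))) / (Real.sqrt 2 : ℂ)) ^ (2*ℓ)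
      = (-Complex.I) ^ ℓ := by
    rw [hi1, TYaux_key]
    congr 1
    rw [show (1 - Complex.I)^2 = 1 - 2*Complex.I + Complex.I^2 by ring, Complex.I_sq]
    ring
  have hF2 : ((1 + Complex.I ^ (-((2:ℕ):ℤ))) / (Real.sqrt 2 : ℂ)) ^ (2*ℓ) = 0 := by
    rw [hi2, zero_div, zero_pow]
    omega
  have hF3 : ((1 + Complex.I ^ (-((3:ℕ):ℤ))) / (Real.sqrt 2 : ℂ)) ^ (2*ℓ)
      = Complex.I ^ ℓ := by
    rw [hi3, TYaux_key]
    congr 1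
    rw [show (1 + Complex.I)^2 = 1 + 2*Complex.I + Complex.I^2 by ring, Complex.I_sq]
    ring
  have hF4 : ((1 + Complex.I ^ (-((4:ℕ):ℤ))) / (Real.sqrt 2 : ℂ)) ^ (2*ℓ)
      = 2 ^ ℓ := by
    rw [hi4, TYaux_key]
    norm_num
  -- indicators at odd n
  have hm1 : ν (Sum.inr ()) 1 = 0 := hνodd 1 ⟨0, rfl⟩
  have hm3 : ν (Sum.inr ()) 3 = 0 := hνodd 3 ⟨1, rfl⟩
  have hm5 : ν (Sum.inr ()) 5 = 0 := hνodd 5 ⟨2, rfl⟩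
  have hm7 : ν (Sum.inr ()) 7 = 0 := hνodd 7 ⟨3, rfl⟩
  -- invertible objects satisfy the spec at each even n
  have hinl : ∀ (k : ℕ) (a : Fin (2*ℓ) → ZMod 2),
      ν (Sum.inl a) (2*k) = dTY2 ℓ (Sum.inl a) := by
    intro k a
    rw [hνa, if_pos (haeven k a)]
    rfl
  constructor
  · -- non-alternating case
    intro hna
    have hm2 : ν (Sum.inr ()) 2 = s := by
      have h := hν_not_alt hna 1 one_pos
      rw [show (2*1 : ℕ) = 2 from rfl, hw 1, hF1] at h
      rw [h, pow_one, mul_one, mul_assoc, ← mul_pow, hImulnegI, one_pow, mul_one]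
    have hm4 : ν (Sum.inr ()) 4 = 0 := by
      have h := hν_not_alt hna 2 (by norm_num)
      rw [show (2*2 : ℕ) = 4 from rfl, hF2] at h
      rw [h, mul_zero]
    have hm6 : ν (Sum.inr ()) 6 = s := by
      have h := hν_not_alt hna 3 (by norm_num)
      rw [show (2*3 : ℕ) = 6 from rfl, hw 3, hF3] at h
      rw [h, mul_assoc, ← pow_add,
        show ℓ * 3 + ℓ = 4 * ℓ by ring, pow_mul, hI4, one_pow, mul_one,
        show (3:ℕ) = 2 + 1 from rfl, pow_add, hs2, one_mul, pow_one]
    have hm8 : ν (Sum.inr ()) 8 = 2 ^ ℓ := by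
      have h := hν_not_alt hna 4 (by norm_num)
      rw [show (2*4 : ℕ) = 8 from rfl, hw 4, hF4] at h
      rw [h, show (4:ℕ) = 2*2 from rfl, pow_mul, hs2, one_pow, one_mul,
        show ℓ * (2*2) = 4 * ℓ by ring, pow_mul, hI4, one_pow, one_mul]
    have hle : N ≤ 8 := by
      apply hNmin 8 (by norm_num)
      rintro (a | ⟨⟩)
      · exact hinl 4 a
      · rw [show (8:ℕ) = 2*4 from rfl] at hm8 ⊢
        exact hm8
    have hspec := hNspec (Sum.inr ())
    have hdm : dTY2 ℓ (Sum.inr ()) = 2 ^ ℓ := rfl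
    rw [hdm] at hspec
    have hN8 : N = 8 := by
      interval_cases N
      · rw [hm1] at hspec; exact absurd hspec.symm hpne
      · rw [hm2] at hspec
        rcases hscases with h | h <;> rw [h] at hspec
        · exact absurd hspec.symm hp1
        · exact absurd hspec.symm hpm1
      · rw [hm3] at hspec; exact absurd hspec.symm hpne
      · rw [hm4] at hspec; exact absurd hspec.symm hpne
      · rw [hm5] at hspec; exact absurd hspec.symm hpne
      · rw [hm6] at hspec
        rcases hscases with h | h <;> rw [h] at hspec
        · exact absurd hspec.symm hp1
        · exact absurd hspec.symm hpm1
      · rw [hm7] at hspec; exact absurd hspec.symm hpne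
      · rfl
    refine ⟨hN8, ?_⟩
    rw [hN8, TYaux_sum8, hm1, hm2, hm3, hm4, hm5, hm6, hm7, hm8]
    ring
  constructor
  · -- alternating case
    intro halt
    have hm2 : ν (Sum.inr ()) 2 = s := by
      have h := hν_alt halt 1 one_pos
      rw [show (2*1 : ℕ) = 2 from rfl, if_pos (by decide : Odd 1)] at h
      exact h
    have hm4 : ν (Sum.inr ()) 4 = 2 ^ ℓ := by
      have h := hν_alt halt 2 (by norm_num)
      rw [show (2*2 : ℕ) = 4 from rfl, if_neg (by decide : ¬ Odd 2)] at h
      exact h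
    have hle : N ≤ 4 := by
      apply hNmin 4 (by norm_num)
      rintro (a | ⟨⟩)
      · exact hinl 2 a
      · rw [show (4:ℕ) = 2*2 from rfl] at hm4 ⊢
        exact hm4
    have hspec := hNspec (Sum.inr ())
    have hdm : dTY2 ℓ (Sum.inr ()) = 2 ^ ℓ := rfl
    rw [hdm] at hspec
    have hN4 : N = 4 := by
      interval_cases N
      · rw [hm1] at hspec; exact absurd hspec.symm hpne
      · rw [hm2] at hspec
        rcases hscases with h | h <;> rw [h] at hspec
        · exact absurd hspec.symm hp1
        · exact absurd hspec.symm hpm1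
      · rw [hm3] at hspec; exact absurd hspec.symm hpne
      · rfl
    refine ⟨hN4, ?_⟩
    rw [hN4, TYaux_sum4, hm1, hm2, hm3, hm4]
    ring
  · -- the final equivalence
    by_cases halt : ∀ v, B v v = 0
    · -- alternating: both sides false
      have hm2 : ν (Sum.inr ()) 2 = s := by
        have h := hν_alt halt 1 one_pos
        rw [show (2*1 : ℕ) = 2 from rfl, if_pos (by decide : Odd 1)] at h
        exact h
      have hm4 : ν (Sum.inr ()) 4 = 2 ^ ℓ := by
        have h := hν_alt halt 2 (by norm_num)
        rw [show (2*2 : ℕ) = 4 from rfl, if_neg (by decide : ¬ Odd 2)] at h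
        exact h
      have hle : N ≤ 4 := by
        apply hNmin 4 (by norm_num)
        rintro (a | ⟨⟩)
        · exact hinl 2 a
        · rw [show (4:ℕ) = 2*2 from rfl] at hm4 ⊢
          exact hm4
      have hspec := hNspec (Sum.inr ())
      have hdm : dTY2 ℓ (Sum.inr ()) = 2 ^ ℓ := rfl
      rw [hdm] at hspec
      have hN4 : N = 4 := by
        interval_cases N
        · rw [hm1] at hspec; exact absurd hspec.symm hpne
        · rw [hm2] at hspec
          rcases hscases with h | h <;> rw [h] at hspec
          · exact absurd hspec.symm hp1
          · exact absurd hspec.symm hpm1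
        · rw [hm3] at hspec; exact absurd hspec.symm hpne
        · rfl
      have hsum : (∑ i ∈ Finset.Icc 1 N, ν (Sum.inr ()) i) = s + 2 ^ ℓ := by
        rw [hN4, TYaux_sum4, hm1, hm2, hm3, hm4]
        ring
      rw [hsum]
      constructor
      · intro h
        exfalso
        rcases hscases with hs1 | hs1 <;> rw [hs1] at h
        · exact hpm1 (by linear_combination h)
        · exact hp1 (by linear_combination h)
      · rintro ⟨h, -⟩
        exact absurd halt h
    · -- non-alternating
      have hm2 : ν (Sum.inr ()) 2 = s := by
        have h := hν_not_alt halt 1 one_pos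
        rw [show (2*1 : ℕ) = 2 from rfl, hw 1, hF1] at h
        rw [h, pow_one, mul_one, mul_assoc, ← mul_pow, hImulnegI, one_pow, mul_one]
      have hm4 : ν (Sum.inr ()) 4 = 0 := by
        have h := hν_not_alt halt 2 (by norm_num)
        rw [show (2*2 : ℕ) = 4 from rfl, hF2] at h
        rw [h, mul_zero]
      have hm6 : ν (Sum.inr ()) 6 = s := by
        have h := hν_not_alt halt 3 (by norm_num)
        rw [show (2*3 : ℕ) = 6 from rfl, hw 3, hF3] at h
        rw [h, mul_assoc, ← pow_add,
          show ℓ * 3 + ℓ = 4 * ℓ by ring, pow_mul, hI4, one_pow, mul_one,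
          show (3:ℕ) = 2 + 1 from rfl, pow_add, hs2, one_mul, pow_one]
      have hm8 : ν (Sum.inr ()) 8 = 2 ^ ℓ := by
        have h := hν_not_alt halt 4 (by norm_num)
        rw [show (2*4 : ℕ) = 8 from rfl, hw 4, hF4] at h
        rw [h, show (4:ℕ) = 2*2 from rfl, pow_mul, hs2, one_pow, one_mul,
          show ℓ * (2*2) = 4 * ℓ by ring, pow_mul, hI4, one_pow, one_mul]
      have hle : N ≤ 8 := by
        apply hNmin 8 (by norm_num)
        rintro (a | ⟨⟩)
        · exact hinl 4 a
        · rw [show (8:ℕ) = 2*4 from rfl] at hm8 ⊢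
          exact hm8
      have hspec := hNspec (Sum.inr ())
      have hdm : dTY2 ℓ (Sum.inr ()) = 2 ^ ℓ := rfl
      rw [hdm] at hspec
      have hN8 : N = 8 := by
        interval_cases N
        · rw [hm1] at hspec; exact absurd hspec.symm hpne
        · rw [hm2] at hspec
          rcases hscases with h | h <;> rw [h] at hspec
          · exact absurd hspec.symm hp1
          · exact absurd hspec.symm hpm1
        · rw [hm3] at hspec; exact absurd hspec.symm hpne
        · rw [hm4] at hspec; exact absurd hspec.symm hpne
        · rw [hm5] at hspec; exact absurd hspec.symm hpne
        · rw [hm6] at hspec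
          rcases hscases with h | h <;> rw [h] at hspec
          · exact absurd hspec.symm hp1
          · exact absurd hspec.symm hpm1
        · rw [hm7] at hspec; exact absurd hspec.symm hpne
        · rfl
      have hsum : (∑ i ∈ Finset.Icc 1 N, ν (Sum.inr ()) i) = 2 * s + 2 ^ ℓ := by
        rw [hN8, TYaux_sum8, hm1, hm2, hm3, hm4, hm5, hm6, hm7, hm8]
        ring
      rw [hsum]
      constructor
      · intro h
        refine ⟨halt, ?_, ?_⟩
        · rcases hscases with hs1 | hs1 <;> rw [hs1] at h
          · exact absurd (by linear_combination h) (TYaux_pow_ne_neg_two ℓ)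
          · exact TYaux_pow_eq_two (by push_cast; linear_combination h)
        · rcases hscases with hs1 | hs1 <;> rw [hs1] at h
          · exact absurd (by linear_combination h) (TYaux_pow_ne_neg_two ℓ)
          · rw [← hτneg]
            intro hpos
            rw [hs, if_pos hpos] at hs1
            norm_num at hs1
      · rintro ⟨-, hℓ1, hτn⟩
        have hs1 : s = -1 := by rw [hs, if_neg (not_lt.mpr hτn.le)]
        rw [hs1, hℓ1]
        ring
end

section
/- Let p be an odd prime, V = 𝔽_p^{2ℓ}, B a non-degenerate symmetric bilinear form on V with associated bicharacter χ_B, τ a square root of |V|⁻¹ = p^{-2ℓ}, and C = TY(V, χ_B, τ) with its canonical spherical structure. Write ε = ((−1)/p)^ℓ (det B / p) sgn(τ), a product of Legendre symbols and the sign of τ. (i) If ε = 1, then FSexp(C) = 2p and ν̄(m) = p^ℓ + (p−1)·sgn(τ). (ii) If ε = −1, then FSexp(C) = 4p and ν̄(m) = 0. -/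
open scoped Classical

/-- The pivotal dimensions in `TY(V, χ_B, τ)` for `V` of order `p^(2ℓ)`:
`d(a) = 1` for `a ∈ V` and `d(m) = √|V| = p^ℓ`. -/
noncomputable def dTYp (p ℓ : ℕ) : TYObj (Fin (2 * ℓ) → ZMod p) → ℂ :=
  Sum.elim (fun _ => (1 : ℂ)) (fun _ => (p : ℂ) ^ ℓ)

/-- `ε_p = √((-1/p))`: equal to `1` if `-1` is a quadratic residue mod `p`, and to `i`
otherwise. -/
noncomputable def epsP (p : ℕ) [Fact p.Prime] : ℂ :=
  if legendreSym p (-1) = 1 then 1 else Complex.I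

/-- **Proposition 5.4.** Let `p` be an odd prime, `V = 𝔽_p^(2ℓ)`, `B` a
non-degenerate symmetric bilinear form on `V` (recorded by its Gram matrix `M`), `χ_B` the
associated bicharacter, `τ` a square root of `|V|⁻¹ = p^(-2ℓ)`, and `C = TY(V, χ_B, τ)`
with its canonical spherical structure, whose Frobenius–Schur indicators are given by
`ν_n(a) = δ_{na,0}` for `a ∈ V` and by Shimizu's formulas for `m` (recorded as hypotheses
below).  Write `ε = ((-1)/p)^ℓ (det B / p) sgn(τ)`.  Then:
(i) if `ε = 1`, then `FSexp(C) = 2p` and `ν̄(m) = p^ℓ + (p - 1)·sgn(τ)`;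
(ii) if `ε = -1`, then `FSexp(C) = 4p` and `ν̄(m) = 0`. -/
theorem TY_odd_char_FSexp_and_totalInd
    (p : ℕ) [Fact p.Prime] (hp2 : p ≠ 2) (ℓ : ℕ) (hℓ : 0 < ℓ)
    (M : Matrix (Fin (2 * ℓ)) (Fin (2 * ℓ)) (ZMod p))
    (hMsymm : M.IsSymm) (hMdet : M.det ≠ 0)
    (τ : ℝ) (hτ : τ ^ 2 = ((p : ℝ) ^ (2 * ℓ))⁻¹)
    (ν : TYObj (Fin (2 * ℓ) → ZMod p) → ℕ → ℂ)
    -- the indicators of the invertible objects: `ν_n(a) = δ_{na,0}`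
    (hνa : ∀ a n, ν (Sum.inl a) n = if n • a = 0 then (1 : ℂ) else 0)
    -- Shimizu's formulas for the indicators of `m`:
    (hνodd : ∀ n, Odd n → ν (Sum.inr ()) n = 0)
    (hν_ndvd : ∀ k, 0 < k → ¬ p ∣ k →
      ν (Sum.inr ()) (2 * k) =
        (if 0 < τ then (1 : ℂ) else -1) ^ k * epsP p ^ (2 * ℓ * (k + 1)) *
          ((legendreSym p (-(k : ℤ)) : ℂ)) ^ (2 * ℓ) *
          ((legendreSym p (-2) : ℂ)) ^ (2 * ℓ * (k + 1)) *
          ((legendreSym p (M.det.val : ℤ) : ℂ)) ^ (k + 1))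
    (hν_dvd : ∀ k, 0 < k → p ∣ k →
      ν (Sum.inr ()) (2 * k) =
        (if 0 < τ then (1 : ℂ) else -1) ^ k * epsP p ^ (2 * ℓ * k) *
          ((legendreSym p (-2) : ℂ)) ^ (2 * ℓ * k) *
          ((legendreSym p (M.det.val : ℤ) : ℂ)) ^ k * (p : ℂ) ^ ℓ)
    -- `N = FSexp(C)`:
    (N : ℕ) (hN : 0 < N)
    (hNspec : ∀ s, ν s N = dTYp p ℓ s)
    (hNmin : ∀ n, 0 < n → (∀ s, ν s n = dTYp p ℓ s) → N ≤ n) :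
    ((legendreSym p (-1)) ^ ℓ * legendreSym p (M.det.val : ℤ) *
        (if 0 < τ then 1 else -1) = 1 →
      N = 2 * p ∧ (∑ i ∈ Finset.Icc 1 N, ν (Sum.inr ()) i) =
        (p : ℂ) ^ ℓ + ((p : ℂ) - 1) * (if 0 < τ then (1 : ℂ) else -1)) ∧
    ((legendreSym p (-1)) ^ ℓ * legendreSym p (M.det.val : ℤ) *
        (if 0 < τ then 1 else -1) = -1 →
      N = 4 * p ∧ (∑ i ∈ Finset.Icc 1 N, ν (Sum.inr ()) i) = 0) := by
  classical
  have hp := Fact.out (p := p.Prime)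
  have hp3 : 2 < p := lt_of_le_of_ne hp.two_le (Ne.symm hp2)
  have hpodd : Odd p := hp.odd_of_ne_two hp2
  -- abbreviations
  set m : TYObj (Fin (2*ℓ) → ZMod p) := Sum.inr () with hm
  set sC : ℂ := if 0 < τ then 1 else -1 with hsC
  -- basic sign facts
  have hsCpm : sC = 1 ∨ sC = -1 := by rw [hsC]; split_ifs <;> simp
  have hsC2 : sC ^ 2 = 1 := by rcases hsCpm with h | h <;> rw [h] <;> norm_num
  have hnz : ∀ a : ℤ, ¬ (p:ℤ) ∣ a → ((a : ZMod p) ≠ 0) := by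
    intro a ha h
    exact ha ((ZMod.intCast_zmod_eq_zero_iff_dvd a p).mp h)
  have hDnz : ((M.det.val : ℤ) : ZMod p) ≠ 0 := by
    simpa [ZMod.natCast_val, ZMod.cast_id] using hMdet
  have h2nz : (((-2 : ℤ) : ZMod p) ≠ 0) := by
    apply hnz
    rw [Int.dvd_neg]
    intro h
    have := Int.le_of_dvd (by norm_num) h
    omega
  have hE1nz : (((-1 : ℤ) : ZMod p) ≠ 0) := by
    apply hnz
    rw [Int.dvd_neg]
    intro h
    have := Int.le_of_dvd (by norm_num) h
    omega
  have hDpm : legendreSym p (M.det.val : ℤ) = 1 ∨ legendreSym p (M.det.val : ℤ) = -1 :=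
    legendreSym.eq_one_or_neg_one p hDnz
  have hE1pm : legendreSym p (-1) = 1 ∨ legendreSym p (-1) = -1 :=
    legendreSym.eq_one_or_neg_one p hE1nz
  have hL2sq : ((legendreSym p (-2) : ℂ)) ^ 2 = 1 := by
    have := legendreSym.sq_one p h2nz
    exact_mod_cast congrArg (fun z : ℤ => (z : ℂ)) this
  have hE2 : epsP p ^ 2 = ((legendreSym p (-1) : ℤ) : ℂ) := by
    rw [epsP]
    split_ifs with h
    · rw [h]; norm_num
    · rcases hE1pm with h' | h'
      · exact absurd h' h
      · rw [h', Complex.I_sq]; norm_num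
  -- the key sign ε as a complex number
  set eC : ℂ := ((legendreSym p (-1) : ℤ) : ℂ) ^ ℓ * ((legendreSym p (M.det.val : ℤ) : ℤ) : ℂ) * sC
    with heC
  have heCpm : eC = 1 ∨ eC = -1 := by
    have : eC * eC = 1 := by
      rw [heC]
      have e1 : (((legendreSym p (-1) : ℤ) : ℂ) ^ ℓ) * (((legendreSym p (-1) : ℤ) : ℂ) ^ ℓ)
          = (((legendreSym p (-1) : ℤ) : ℂ) ^ 2) ^ ℓ := by ring
      have e2 : ((legendreSym p (-1) : ℤ) : ℂ) ^ 2 = 1 := by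
        rcases hE1pm with h | h <;> rw [h] <;> norm_num
      have e3 : ((legendreSym p (M.det.val : ℤ) : ℤ) : ℂ) ^ 2 = 1 := by
        rcases hDpm with h | h <;> rw [h] <;> norm_num
      calc (((legendreSym p (-1) : ℤ) : ℂ) ^ ℓ * ((legendreSym p (M.det.val : ℤ) : ℤ) : ℂ) * sC) *
            (((legendreSym p (-1) : ℤ) : ℂ) ^ ℓ * ((legendreSym p (M.det.val : ℤ) : ℤ) : ℂ) * sC)
          = ((((legendreSym p (-1) : ℤ) : ℂ) ^ 2) ^ ℓ) *
            (((legendreSym p (M.det.val : ℤ) : ℤ) : ℂ) ^ 2) * sC ^ 2 := by ring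
        _ = 1 := by rw [e2, e3, hsC2]; norm_num
    exact mul_self_eq_one_iff.mp this
  -- simplified formulas for the indicators of m
  have key_ndvd : ∀ k, 0 < k → ¬ p ∣ k → ν m (2*k) = eC ^ (k+1) * sC := by
    intro k hk hpk
    rw [hm, hν_ndvd k hk hpk]
    have hLksq : ((legendreSym p (-(k : ℤ)) : ℂ)) ^ 2 = 1 := by
      have hknz : ((-(k:ℤ) : ℤ) : ZMod p) ≠ 0 := by
        apply hnz
        rw [Int.dvd_neg, Int.natCast_dvd_natCast]
        exact hpk
      have := legendreSym.sq_one p hknz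
      exact_mod_cast congrArg (fun z : ℤ => (z : ℂ)) this
    have e1 : epsP p ^ (2 * ℓ * (k+1)) = (((legendreSym p (-1) : ℤ) : ℂ)) ^ (ℓ * (k+1)) := by
      rw [mul_assoc, pow_mul, hE2]
    have e2 : ((legendreSym p (-(k : ℤ)) : ℂ)) ^ (2 * ℓ) = 1 := by
      rw [pow_mul, hLksq, one_pow]
    have e3 : ((legendreSym p (-2) : ℂ)) ^ (2 * ℓ * (k+1)) = 1 := by
      rw [mul_assoc, pow_mul, hL2sq, one_pow]
    rw [e1, e2, e3, heC]
    linear_combination (-(((legendreSym p (-1) : ℤ) : ℂ) ^ (ℓ * (k+1)) *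
      ((legendreSym p (M.det.val : ℤ) : ℤ) : ℂ) ^ (k+1) * sC ^ k)) * hsC2
  have key_dvd : ∀ k, 0 < k → p ∣ k → ν m (2*k) = eC ^ k * (p:ℂ) ^ ℓ := by
    intro k hk hpk
    rw [hm, hν_dvd k hk hpk]
    have e1 : epsP p ^ (2 * ℓ * k) = (((legendreSym p (-1) : ℤ) : ℂ)) ^ (ℓ * k) := by
      rw [mul_assoc, pow_mul, hE2]
    have e3 : ((legendreSym p (-2) : ℂ)) ^ (2 * ℓ * k) = 1 := by
      rw [mul_assoc, pow_mul, hL2sq, one_pow]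
    rw [e1, e3, heC]
    ring
  -- p^ℓ is large
  have hp0C : ((p:ℂ)) ^ ℓ ≠ 0 := pow_ne_zero _ (by exact_mod_cast hp.pos.ne')
  have h3le : 3 ≤ p ^ ℓ := by
    calc 3 ≤ p := hp3
      _ = p ^ 1 := (pow_one p).symm
      _ ≤ p ^ ℓ := Nat.pow_le_pow_right hp.pos hℓ
  have hpcast : ((p:ℂ)) ^ ℓ = ((p ^ ℓ : ℕ) : ℂ) := by push_cast; ring
  have hpne1 : ((p:ℂ)) ^ ℓ ≠ 1 := by
    rw [hpcast]
    intro h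
    have : p ^ ℓ = 1 := by exact_mod_cast h
    omega
  have hpnem1 : ((p:ℂ)) ^ ℓ ≠ -1 := by
    rw [hpcast]
    intro h
    have h2 : ((p ^ ℓ : ℕ) : ℤ) = -1 := by exact_mod_cast h
    omega
  -- forward direction: extracting the shape of a "good" n from ν_n(m) = p^ℓ
  have forward : ∀ n, 0 < n → ν m n = (p:ℂ) ^ ℓ →
      ∃ k, 0 < k ∧ n = 2*k ∧ p ∣ k ∧ eC ^ k = 1 := by
    intro n hn hmn
    have hev : Even n := by
      by_contra hodd
      rw [hm, hνodd n (Nat.not_even_iff_odd.mp hodd)] at hmn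
      exact hp0C hmn.symm
    obtain ⟨c, hc⟩ := hev
    have hk : n = 2 * c := by omega
    have hc0 : 0 < c := by omega
    by_cases hdvd : p ∣ c
    · refine ⟨c, hc0, hk, hdvd, ?_⟩
      rw [hk, key_dvd c hc0 hdvd] at hmn
      have : eC ^ c * (p:ℂ) ^ ℓ = 1 * (p:ℂ) ^ ℓ := by rw [hmn, one_mul]
      exact mul_right_cancel₀ hp0C this
    · exfalso
      rw [hk, key_ndvd c hc0 hdvd] at hmn
      have hval : eC ^ (c+1) * sC = 1 ∨ eC ^ (c+1) * sC = -1 := by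
        have h1 : eC ^ (c+1) = 1 ∨ eC ^ (c+1) = -1 := by
          rcases heCpm with h | h
          · left; rw [h, one_pow]
          · rw [h]; exact neg_one_pow_eq_or ℂ (c+1)
        rcases h1 with h | h <;> rcases hsCpm with h' | h' <;> rw [h, h'] <;> norm_num
      rcases hval with h | h <;> rw [h] at hmn
      · exact hpne1 hmn.symm
      · exact hpnem1 hmn.symm
  -- invertible objects: ν_n(a) = 1 whenever p ∣ n
  have hA : ∀ (a : Fin (2*ℓ) → ZMod p) n, p ∣ n → ν (Sum.inl a) n = 1 := by
    intro a n hdvd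
    rw [hνa]
    have : n • a = 0 := by
      funext i
      show n • a i = 0
      rw [nsmul_eq_mul]
      have : ((n : ℕ) : ZMod p) = 0 := (ZMod.natCast_eq_zero_iff n p).mpr hdvd
      rw [this, zero_mul]
    rw [if_pos this]
  -- backward direction: good n's satisfy ν_n = d
  have backward : ∀ k, 0 < k → p ∣ k → eC ^ k = 1 → ∀ s, ν s (2*k) = dTYp p ℓ s := by
    intro k hk hdvd hek s
    cases s with
    | inl a => rw [hA a _ (Dvd.dvd.mul_left hdvd 2)]; simp [dTYp]
    | inr u =>
        cases u
        have hd : dTYp p ℓ (Sum.inr () : TYObj (Fin (2*ℓ) → ZMod p)) = (p:ℂ) ^ ℓ := rfl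
        rw [hd, ← hm, key_dvd k hk hdvd, hek, one_mul]
  -- the generic even/odd sum reduction
  have sum_even : ∀ (g : ℕ → ℂ), (∀ i, Odd i → g i = 0) → ∀ n,
      ∑ i ∈ Finset.Icc 1 (2*n), g i = ∑ k ∈ Finset.Icc 1 n, g (2*k) := by
    intro g hg n
    induction n with
    | zero => simp
    | succ n ih =>
        rw [show 2*(n+1) = (2*n+1)+1 by ring,
          Finset.sum_Icc_succ_top (by omega : 1 ≤ 2*n+1+1),
          Finset.sum_Icc_succ_top (by omega : 1 ≤ 2*n+1), ih,
          Finset.sum_Icc_succ_top (by omega : 1 ≤ n+1),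
          hg (2*n+1) ⟨n, by ring⟩, show 2*n+1+1 = 2*(n+1) by ring]
        ring
  have alt : ∀ n : ℕ, ∑ k ∈ Finset.Icc 1 (2*n), ((-1:ℂ)) ^ (k+1) = 0 := by
    intro n
    induction n with
    | zero => simp
    | succ n ih =>
        rw [show 2*(n+1) = (2*n+1)+1 by ring,
          Finset.sum_Icc_succ_top (by omega : 1 ≤ 2*n+1+1),
          Finset.sum_Icc_succ_top (by omega : 1 ≤ 2*n+1), ih]
        have e1 : ((-1:ℂ)) ^ (2*n+1+1) = 1 := by
          rw [show 2*n+1+1 = 2*(n+1) by ring, pow_mul]; norm_num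
        have e2 : ((-1:ℂ)) ^ (2*n+1+1+1) = -1 := by
          rw [pow_succ, e1, one_mul]
        rw [e1, e2]; ring
  -- casting the hypothesis sign
  have hcast : ∀ z : ℤ, (legendreSym p (-1)) ^ ℓ * legendreSym p (M.det.val : ℤ) *
      (if 0 < τ then 1 else -1) = z → eC = (z : ℂ) := by
    intro z hz
    rw [heC, ← hz, hsC]
    split_ifs <;> push_cast <;> ring
  constructor
  · -- case ε = 1
    intro hε
    have heC1 : eC = 1 := by rw [hcast 1 hε]; norm_num
    have hup : ∀ s, ν s (2*p) = dTYp p ℓ s :=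
      backward p hp.pos dvd_rfl (by rw [heC1, one_pow])
    have hle : N ≤ 2*p := hNmin (2*p) (by omega) hup
    have hνm : ν m N = (p:ℂ) ^ ℓ := by rw [hm, hNspec]; simp [dTYp]
    obtain ⟨k, hk0, hkN, hdvd, hke⟩ := forward N hN hνm
    have hkp : p ≤ k := Nat.le_of_dvd hk0 hdvd
    have hNe : N = 2*p := by omega
    refine ⟨hNe, ?_⟩
    rw [hNe, sum_even (fun i => ν (Sum.inr ()) i) (fun i hi => hνodd i hi) p]
    have hterm : ∀ k ∈ Finset.Icc 1 p, ν (Sum.inr ()) (2*k)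
        = sC + (if k = p then (p:ℂ) ^ ℓ - sC else 0) := by
      intro k hk
      rw [Finset.mem_Icc] at hk
      by_cases hkp' : k = p
      · subst hkp'
        rw [← hm, key_dvd k (by omega) dvd_rfl, heC1, one_pow, one_mul, if_pos rfl]
        ring
      · have hndvd : ¬ p ∣ k := by
          intro h
          have := Nat.le_of_dvd (by omega) h
          omega
        rw [← hm, key_ndvd k (by omega) hndvd, heC1, one_pow, one_mul, if_neg hkp']
        ring
    rw [Finset.sum_congr rfl hterm, Finset.sum_add_distrib, Finset.sum_const,
      Finset.sum_ite_eq' (Finset.Icc 1 p) p (fun _ => (p:ℂ) ^ ℓ - sC),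
      if_pos (by rw [Finset.mem_Icc]; omega), Nat.card_Icc]
    simp only [nsmul_eq_mul]
    push_cast [Nat.add_sub_cancel]
    ring
  · -- case ε = -1
    intro hε
    have heCm1 : eC = -1 := by rw [hcast (-1) hε]; norm_num
    have hup : ∀ s, ν s (2*(2*p)) = dTYp p ℓ s :=
      backward (2*p) (by omega) (Dvd.dvd.mul_left dvd_rfl 2)
        (by rw [heCm1, pow_mul]; norm_num)
    have hle : N ≤ 4*p := by
      have := hNmin (2*(2*p)) (by omega) hup
      omega
    have hνm : ν m N = (p:ℂ) ^ ℓ := by rw [hm, hNspec]; simp [dTYp]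
    obtain ⟨k, hk0, hkN, hdvd, hke⟩ := forward N hN hνm
    rw [heCm1] at hke
    have hkev : Even k := by
      rwa [neg_one_pow_eq_one_iff_even (by norm_num : (-1:ℂ) ≠ 1)] at hke
    have h2p : 2*p ∣ k := by
      have hcop : Nat.Coprime 2 p :=
        (Nat.prime_two.coprime_iff_not_dvd).mpr
          (by simpa [Nat.odd_iff, Nat.two_dvd_ne_zero] using hpodd)
      exact Nat.Coprime.mul_dvd_of_dvd_of_dvd hcop hkev.two_dvd hdvd
    have hkge : 2*p ≤ k := Nat.le_of_dvd hk0 h2p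
    have hNe : N = 4*p := by omega
    refine ⟨hNe, ?_⟩
    rw [hNe, show 4*p = 2*(2*p) by ring,
      sum_even (fun i => ν (Sum.inr ()) i) (fun i hi => hνodd i hi) (2*p)]
    have hterm : ∀ k ∈ Finset.Icc 1 (2*p), ν (Sum.inr ()) (2*k)
        = ((-1:ℂ)) ^ (k+1) * sC + (if k = p then -((p:ℂ) ^ ℓ) - sC else 0)
          + (if k = 2*p then (p:ℂ) ^ ℓ + sC else 0) := by
      intro k hk
      rw [Finset.mem_Icc] at hk
      by_cases hdvd' : p ∣ k
      · obtain ⟨j, rfl⟩ := hdvd'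
        have hj : j = 1 ∨ j = 2 := by
          have hj2 : j ≤ 2 := Nat.le_of_mul_le_mul_left
            (by rw [mul_comm p 2]; exact hk.2) hp.pos
          have hj1 : j ≠ 0 := by rintro rfl; rw [mul_zero] at hk; omega
          omega
        rcases hj with rfl | rfl
        · rw [mul_one] at *
          rw [← hm, key_dvd p hp.pos dvd_rfl, heCm1, hpodd.neg_one_pow,
            if_pos rfl, if_neg (by omega), Even.neg_one_pow (by exact hpodd.add_one)]
          ring
        · rw [← hm, key_dvd (p*2) (by omega) (Dvd.intro 2 rfl), heCm1,
            show p*2 = 2*p by ring, pow_mul]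
          rw [if_neg (by omega), if_pos rfl]
          have : ((-1:ℂ)) ^ (2*p+1) = -1 := by
            rw [pow_succ, pow_mul]; norm_num
          rw [this]
          norm_num
      · have hk1 : k ≠ p := by rintro rfl; exact hdvd' dvd_rfl
        have hk2 : k ≠ 2*p := by rintro rfl; exact hdvd' (Dvd.dvd.mul_left dvd_rfl 2)
        rw [← hm, key_ndvd k (by omega) hdvd', heCm1, if_neg hk1, if_neg hk2]
        ring
    rw [Finset.sum_congr rfl hterm]
    rw [Finset.sum_add_distrib, Finset.sum_add_distrib, ← Finset.sum_mul, alt,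
      Finset.sum_ite_eq' (Finset.Icc 1 (2*p)) p (fun _ => -((p:ℂ) ^ ℓ) - sC),
      Finset.sum_ite_eq' (Finset.Icc 1 (2*p)) (2*p) (fun _ => (p:ℂ) ^ ℓ + sC),
      if_pos (by rw [Finset.mem_Icc]; omega), if_pos (by rw [Finset.mem_Icc]; omega)]
    ring
end
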